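/- Let K ≥ 2, rates c : Fin K → ℝ with c_j > 0 for all j, and w : Fin K → ℝ≥0. If a permutation σ minimizes R_σ(c) = ∑_{t=1}^K (w_{σ(t)} − w_{σ(t−1)}) e^{∑_{k=t}^K c_{σ(k)}} − w_{σ(K)} (w_{σ(0)} := 0) over all permutations, and all w values are distinct, then σ orders the users in strictly increasing w: w_{σ(1)} < w_{σ(2)} < ... < w_{σ(K)}. -/

import Mathlib

/-- Total power required under decoding order `σ` (a bijection of the user set `{1,…,K}`
with the convention `σ 0 = 0` and `w 0 = 0`). -/
noncomputable def RPerm (K : ℕ) (w c : ℕ → ℝ) (σ : ℕ → ℕ) : ℝ :=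
  (∑ t ∈ Finset.Icc 1 K,
      (w (σ t) - w (σ (t - 1))) * Real.exp (∑ k ∈ Finset.Icc t K, c (σ k))) - w (σ K)

namespace Stmt18Aux

noncomputable def E (K : ℕ) (c : ℕ → ℝ) (σ : ℕ → ℕ) (t : ℕ) : ℝ :=
  Real.exp (∑ k ∈ Finset.Icc t K, c (σ k))

lemma abel (K : ℕ) (w c : ℕ → ℝ) (σ : ℕ → ℕ) (h0 : w (σ 0) = 0) :
    RPerm K w c σ = ∑ t ∈ Finset.Icc 1 K, w (σ t) * (E K c σ t - E K c σ (t + 1)) := by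
  rcases Nat.eq_zero_or_pos K with hK0 | hK0
  · subst hK0; simp [RPerm, h0]
  obtain ⟨K', rfl⟩ : ∃ K', K = K' + 1 := ⟨K - 1, by omega⟩
  have hshift : ∑ t ∈ Finset.Icc 1 (K' + 1),
        w (σ (t - 1)) * Real.exp (∑ k ∈ Finset.Icc t (K' + 1), c (σ k))
      = ∑ t ∈ Finset.Icc 1 K',
        w (σ t) * Real.exp (∑ k ∈ Finset.Icc (t + 1) (K' + 1), c (σ k)) := by
    have hmap : Finset.Icc 1 (K' + 1)
        = Finset.map (addRightEmbedding 1) (Finset.Icc 0 K') := by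
      rw [Finset.map_add_right_Icc]
    rw [hmap, Finset.sum_map]
    have hbody : ∀ t, w (σ (addRightEmbedding 1 t - 1))
        * Real.exp (∑ k ∈ Finset.Icc (addRightEmbedding 1 t) (K' + 1), c (σ k))
        = w (σ t) * Real.exp (∑ k ∈ Finset.Icc (t + 1) (K' + 1), c (σ k)) := by
      intro t; rfl
    simp only [hbody]
    have h0in : Finset.Icc 0 K' = insert 0 (Finset.Icc 1 K') := by
      ext x
      simp only [Finset.mem_insert, Finset.mem_Icc]
      omega
    rw [h0in, Finset.sum_insert (by simp)]
    rw [h0, zero_mul, zero_add]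
  have hEtop : Real.exp (∑ k ∈ Finset.Icc (K' + 1 + 1) (K' + 1), c (σ k)) = 1 := by
    rw [Finset.Icc_eq_empty (by omega), Finset.sum_empty, Real.exp_zero]
  simp only [RPerm, E]
  simp only [mul_sub, sub_mul, Finset.sum_sub_distrib]
  rw [hshift, Finset.sum_Icc_succ_top (by omega)
    (fun t => w (σ t) * Real.exp (∑ k ∈ Finset.Icc (t + 1) (K' + 1), c (σ k))), hEtop]
  ring

lemma swap_bijOn {K s : ℕ} (hs1 : 1 ≤ s) (hsK : s + 1 ≤ K) :
    Set.BijOn (Equiv.swap s (s + 1)) (Set.Icc 1 K) (Set.Icc 1 K) := by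
  have hmaps : Set.MapsTo (Equiv.swap s (s + 1)) (Set.Icc 1 K) (Set.Icc 1 K) := by
    intro x hx
    simp only [Set.mem_Icc] at hx ⊢
    rcases eq_or_ne x s with rfl | hxs
    · rw [Equiv.swap_apply_left]; omega
    rcases eq_or_ne x (s + 1) with rfl | hxs1
    · rw [Equiv.swap_apply_right]; omega
    · rw [Equiv.swap_apply_of_ne_of_ne hxs hxs1]; omega
  refine ⟨hmaps, (Equiv.injective _).injOn, ?_⟩
  intro y hy
  exact ⟨Equiv.swap s (s + 1) y, hmaps hy, by simp⟩

lemma sum_swap_low {K s : ℕ} (c : ℕ → ℝ) (σ : ℕ → ℕ)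
    (hs1 : 1 ≤ s) (hsK : s + 1 ≤ K) {t : ℕ} (ht : t ≤ s) :
    ∑ k ∈ Finset.Icc t K, c (σ (Equiv.swap s (s + 1) k))
      = ∑ k ∈ Finset.Icc t K, c (σ k) := by
  refine Finset.sum_equiv (Equiv.swap s (s + 1)) (fun i => ?_) (fun i _ => rfl)
  simp only [Finset.mem_Icc, Equiv.swap_apply_def]
  split_ifs <;> omega

lemma sum_swap_high {K s : ℕ} (c : ℕ → ℝ) (σ : ℕ → ℕ) {t : ℕ} (ht : s + 2 ≤ t) :
    ∑ k ∈ Finset.Icc t K, c (σ (Equiv.swap s (s + 1) k))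
      = ∑ k ∈ Finset.Icc t K, c (σ k) := by
  refine Finset.sum_congr rfl fun k hk => ?_
  simp only [Finset.mem_Icc] at hk
  rw [Equiv.swap_apply_of_ne_of_ne (by omega) (by omega)]

lemma icc_insert {s K : ℕ} (hsK : s ≤ K) :
    Finset.Icc s K = insert s (Finset.Icc (s + 1) K) := by
  ext x
  simp only [Finset.mem_insert, Finset.mem_Icc]
  omega

lemma swap_diff (K : ℕ) (c w : ℕ → ℝ) (σ : ℕ → ℕ) {s : ℕ}
    (hs1 : 1 ≤ s) (hsK : s + 1 ≤ K) (hw0 : w (σ 0) = 0) :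
    RPerm K w c (σ ∘ Equiv.swap s (s + 1)) - RPerm K w c σ
      = (w (σ (s + 1)) - w (σ s)) * Real.exp (∑ k ∈ Finset.Icc (s + 2) K, c (σ k))
          * (Real.exp (c (σ s)) - 1) * (Real.exp (c (σ (s + 1))) - 1) := by
  have hτ0 : (σ ∘ Equiv.swap s (s + 1)) 0 = σ 0 := by
    have h00 : Equiv.swap s (s + 1) 0 = 0 :=
      Equiv.swap_apply_of_ne_of_ne (by omega) (by omega)
    simp only [Function.comp_apply, h00]
  rw [abel K w c (σ ∘ Equiv.swap s (s + 1)) (by rw [hτ0]; exact hw0),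
    abel K w c σ hw0, ← Finset.sum_sub_distrib]
  set τ := σ ∘ Equiv.swap s (s + 1) with hτdef
  have hEτ_low : ∀ t ≤ s, E K c τ t = E K c σ t := by
    intro t ht
    simp only [E, hτdef, Function.comp_apply]
    rw [sum_swap_low c σ hs1 hsK ht]
  have hEτ_high : ∀ t, s + 2 ≤ t → E K c τ t = E K c σ t := by
    intro t ht
    simp only [E, hτdef, Function.comp_apply]
    rw [sum_swap_high c σ ht]
  have hEs : E K c σ s
      = Real.exp (c (σ s) + (c (σ (s + 1)) + ∑ k ∈ Finset.Icc (s + 2) K, c (σ k))) := by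
    simp only [E]
    rw [icc_insert (show s ≤ K by omega), Finset.sum_insert (by simp),
      icc_insert (show s + 1 ≤ K by omega), Finset.sum_insert (by simp)]
  have hEs1 : E K c σ (s + 1)
      = Real.exp (c (σ (s + 1)) + ∑ k ∈ Finset.Icc (s + 2) K, c (σ k)) := by
    simp only [E]
    rw [icc_insert (show s + 1 ≤ K by omega), Finset.sum_insert (by simp)]
  have hEτs1 : E K c τ (s + 1)
      = Real.exp (c (σ s) + ∑ k ∈ Finset.Icc (s + 2) K, c (σ k)) := by
    simp only [E, hτdef, Function.comp_apply]
    rw [icc_insert (show s + 1 ≤ K by omega), Finset.sum_insert (by simp),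
      Equiv.swap_apply_right, sum_swap_high c σ le_rfl]
  have hEs2 : E K c σ (s + 2) = Real.exp (∑ k ∈ Finset.Icc (s + 2) K, c (σ k)) := rfl
  have hEτs2 : E K c τ (s + 2) = Real.exp (∑ k ∈ Finset.Icc (s + 2) K, c (σ k)) := by
    simp only [E, hτdef, Function.comp_apply]
    rw [sum_swap_high c σ le_rfl]
  have hzero : ∀ t ∈ Finset.Icc 1 K, t ≠ s ∧ t ≠ s + 1 →
      w (τ t) * (E K c τ t - E K c τ (t + 1))
        - w (σ t) * (E K c σ t - E K c σ (t + 1)) = 0 := by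
    intro t ht htne
    simp only [Finset.mem_Icc] at ht
    have h1 : τ t = σ t := by
      simp only [hτdef, Function.comp_apply,
        Equiv.swap_apply_of_ne_of_ne htne.1 htne.2]
    have hE1 : E K c τ t = E K c σ t := by
      rcases lt_or_ge t s with h | h
      · exact hEτ_low t (by omega)
      · exact hEτ_high t (by omega)
    have hE2 : E K c τ (t + 1) = E K c σ (t + 1) := by
      rcases lt_or_ge t s with h | h
      · exact hEτ_low (t + 1) (by omega)
      · exact hEτ_high (t + 1) (by omega)
    rw [h1, hE1, hE2, sub_self]
  rw [Finset.sum_eq_add s (s + 1) (by omega) hzero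
    (fun h => absurd (Finset.mem_Icc.mpr ⟨hs1, by omega⟩) h)
    (fun h => absurd (Finset.mem_Icc.mpr ⟨by omega, by omega⟩) h)]
  have hτs : τ s = σ (s + 1) := by
    simp only [hτdef, Function.comp_apply, Equiv.swap_apply_left]
  have hτs1 : τ (s + 1) = σ s := by
    simp only [hτdef, Function.comp_apply, Equiv.swap_apply_right]
  have h22 : s + 1 + 1 = s + 2 := rfl
  rw [h22, hτs, hτs1, hEτ_low s le_rfl, hEs, hEs1, hEτs1, hEs2, hEτs2]
  simp only [Real.exp_add]
  ring

end Stmt18Aux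

theorem stmt18 (K : ℕ) (hK : 2 ≤ K) (c w : ℕ → ℝ)
    (hc : ∀ j ∈ Finset.Icc 1 K, 0 < c j)
    (hw0 : w 0 = 0) (hw : ∀ j, 0 ≤ w j)
    (hdistinct : ∀ i ∈ Finset.Icc 1 K, ∀ j ∈ Finset.Icc 1 K, i ≠ j → w i ≠ w j)
    (σ : ℕ → ℕ) (hσ0 : σ 0 = 0) (hσ : Set.BijOn σ (Set.Icc 1 K) (Set.Icc 1 K))
    (hmin : ∀ σ' : ℕ → ℕ, σ' 0 = 0 → Set.BijOn σ' (Set.Icc 1 K) (Set.Icc 1 K) →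
      RPerm K w c σ ≤ RPerm K w c σ') :
    ∀ s t : ℕ, 1 ≤ s → s < t → t ≤ K → w (σ s) < w (σ t) := by
  have key : ∀ s : ℕ, 1 ≤ s → s + 1 ≤ K → w (σ s) < w (σ (s + 1)) := by
    intro s hs1 hsK
    have hmemS : σ s ∈ Set.Icc 1 K := hσ.mapsTo (Set.mem_Icc.2 ⟨hs1, by omega⟩)
    have hmemS1 : σ (s + 1) ∈ Set.Icc 1 K := hσ.mapsTo (Set.mem_Icc.2 ⟨by omega, hsK⟩)
    have hne : σ s ≠ σ (s + 1) := fun h =>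
      absurd (hσ.injOn (Set.mem_Icc.2 ⟨hs1, by omega⟩) (Set.mem_Icc.2 ⟨by omega, hsK⟩) h)
        (by omega)
    have hwne : w (σ s) ≠ w (σ (s + 1)) :=
      hdistinct _ (Finset.mem_Icc.2 (Set.mem_Icc.1 hmemS)) _
        (Finset.mem_Icc.2 (Set.mem_Icc.1 hmemS1)) hne
    set τ := σ ∘ Equiv.swap s (s + 1) with hτ
    have hτ0 : τ 0 = 0 := by
      have h00 : Equiv.swap s (s + 1) 0 = 0 :=
        Equiv.swap_apply_of_ne_of_ne (by omega) (by omega)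
      simp only [hτ, Function.comp_apply, h00, hσ0]
    have hτbij : Set.BijOn τ (Set.Icc 1 K) (Set.Icc 1 K) :=
      hσ.comp (Stmt18Aux.swap_bijOn hs1 hsK)
    have hle := hmin τ hτ0 hτbij
    have hdiff := Stmt18Aux.swap_diff K c w σ hs1 hsK (by rw [hσ0]; exact hw0)
    rw [← hτ] at hdiff
    have h1 : 0 < Real.exp (c (σ s)) - 1 := by
      have hcpos : 0 < c (σ s) := hc _ (Finset.mem_Icc.2 (Set.mem_Icc.1 hmemS))
      have h := Real.exp_lt_exp.mpr hcpos
      rw [Real.exp_zero] at h; linarith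
    have h2 : 0 < Real.exp (c (σ (s + 1))) - 1 := by
      have hcpos : 0 < c (σ (s + 1)) := hc _ (Finset.mem_Icc.2 (Set.mem_Icc.1 hmemS1))
      have h := Real.exp_lt_exp.mpr hcpos
      rw [Real.exp_zero] at h; linarith
    have hP : 0 < Real.exp (∑ k ∈ Finset.Icc (s + 2) K, c (σ k))
        * (Real.exp (c (σ s)) - 1) * (Real.exp (c (σ (s + 1))) - 1) :=
      mul_pos (mul_pos (Real.exp_pos _) h1) h2
    have hform : RPerm K w c τ - RPerm K w c σ
        = (w (σ (s + 1)) - w (σ s))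
          * (Real.exp (∑ k ∈ Finset.Icc (s + 2) K, c (σ k))
            * (Real.exp (c (σ s)) - 1) * (Real.exp (c (σ (s + 1))) - 1)) := by
      rw [hdiff]; ring
    have hΔ : 0 ≤ w (σ (s + 1)) - w (σ s) := by
      by_contra h
      push_neg at h
      have hneg := mul_neg_of_neg_of_pos h hP
      rw [← hform] at hneg
      linarith
    exact lt_of_le_of_ne (by linarith) hwne
  intro s t hs
  induction t with
  | zero => omega
  | succ t ih =>
    intro hst htK
    rcases eq_or_lt_of_le (Nat.lt_succ_iff.1 hst) with rfl | h
    · exact key s hs htK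
    · exact lt_trans (ih h (by omega)) (key t (by omega) htK)
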